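/- Let x ∈ (0,∞)^d be a positive histogram with cumulative sum w_x = Σ_{i=1}^d x^i and normalization x̃ = x/w_x, and let h̃_1, …, h̃_n be frequency histograms with d bins and π_1, …, π_n > 0 weights with Σ_j π_j = 1. Then Σ_{j=1}^n π_j J(x, h̃_j) = Σ_{j=1}^n π_j J(x̃, h̃_j) + (w_x − 1)·( Σ_{j=1}^n π_j KL(x̃ : h̃_j) + log w_x ). -/
import Mathlib


open scoped BigOperators

/-- Jeffreys divergence between positive histograms with `d` bins. -/
noncomputable def Jeffreys {d : ℕ} (p q : Fin d → ℝ) : ℝ :=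
  ∑ i, (p i - q i) * Real.log (p i / q i)

/-- Kullback-Leibler term between positive histograms with `d` bins. -/
noncomputable def KL {d : ℕ} (p q : Fin d → ℝ) : ℝ :=
  ∑ i, p i * Real.log (p i / q i)

lemma jeffreys_norm_key {d : ℕ} (x : Fin d → ℝ) (hx : ∀ i, 0 < x i)
    (q : Fin d → ℝ) (hq : ∀ i, 0 < q i) (hq1 : ∑ i, q i = 1)
    (hw : 0 < ∑ k, x k) :
    Jeffreys x q = Jeffreys (fun i => x i / ∑ k, x k) q +
      ((∑ i, x i) - 1) * (KL (fun i => x i / ∑ k, x k) q + Real.log (∑ i, x i)) := by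
  set w := ∑ k, x k with hwdef
  have hwne : w ≠ 0 := ne_of_gt hw
  have hlog : ∀ i, Real.log (x i / w / q i) = Real.log (x i / q i) - Real.log w := by
    intro i
    rw [Real.log_div (div_ne_zero (ne_of_gt (hx i)) hwne) (ne_of_gt (hq i)),
        Real.log_div (ne_of_gt (hx i)) hwne,
        Real.log_div (ne_of_gt (hx i)) (ne_of_gt (hq i))]
    ring
  unfold Jeffreys KL
  simp only [hlog]
  rw [mul_add, Finset.mul_sum, ← add_assoc, ← Finset.sum_add_distrib]
  have hrw : ∀ i ∈ Finset.univ,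
      (x i / w - q i) * (Real.log (x i / q i) - Real.log w) +
        (w - 1) * (x i / w * (Real.log (x i / q i) - Real.log w)) =
      (x i - q i) * Real.log (x i / q i) - Real.log w * (x i - q i) := by
    intro i _
    field_simp
    ring
  rw [Finset.sum_congr rfl hrw, Finset.sum_sub_distrib, ← Finset.mul_sum,
      Finset.sum_sub_distrib, hq1]
  ring

theorem jeffreys_normalization_identity_weighted
    (d n : ℕ) (x : Fin d → ℝ) (hx : ∀ i, 0 < x i)
    (h : Fin n → Fin d → ℝ) (hpos : ∀ j i, 0 < h j i) (hfreq : ∀ j, ∑ i, h j i = 1)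
    (π : Fin n → ℝ) (hπ : ∀ j, 0 < π j) (hπ1 : ∑ j, π j = 1) :
    ∑ j, π j * Jeffreys x (h j) =
      (∑ j, π j * Jeffreys (fun i => x i / ∑ k, x k) (h j)) +
        ((∑ i, x i) - 1) *
          ((∑ j, π j * KL (fun i => x i / ∑ k, x k) (h j)) + Real.log (∑ i, x i)) := by
  rcases Nat.eq_zero_or_pos d with hd | hd
  · subst hd
    simp [Jeffreys, KL, Real.log_zero]
  · have : Nonempty (Fin d) := Fin.pos_iff_nonempty.mp hd
    have hw : 0 < ∑ k, x k := Finset.sum_pos (fun i _ => hx i) Finset.univ_nonempty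
    have key : ∀ j, Jeffreys x (h j) = Jeffreys (fun i => x i / ∑ k, x k) (h j) +
        ((∑ i, x i) - 1) * (KL (fun i => x i / ∑ k, x k) (h j) + Real.log (∑ i, x i)) :=
      fun j => jeffreys_norm_key x hx (h j) (hpos j) (hfreq j) hw
    calc ∑ j, π j * Jeffreys x (h j)
        = ∑ j, (π j * Jeffreys (fun i => x i / ∑ k, x k) (h j) +
            (((∑ i, x i) - 1) * (π j * KL (fun i => x i / ∑ k, x k) (h j)) +
             ((∑ i, x i) - 1) * Real.log (∑ i, x i) * π j)) := by
          refine Finset.sum_congr rfl fun j _ => ?_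
          rw [key j]; ring
      _ = (∑ j, π j * Jeffreys (fun i => x i / ∑ k, x k) (h j)) +
            (((∑ i, x i) - 1) * ∑ j, π j * KL (fun i => x i / ∑ k, x k) (h j)) +
            ((∑ i, x i) - 1) * Real.log (∑ i, x i) * ∑ j, π j := by
          rw [Finset.sum_add_distrib, Finset.sum_add_distrib, ← Finset.mul_sum,
            ← Finset.mul_sum]; ring
      _ = _ := by rw [hπ1]; ring
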